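/- arXiv:2009.14310 — 2 statements merged into one kernel-verified Lean document; each statement's English description precedes it below -/
import Mathlib

section
/- (Quantile aggregation validity for a single null hypothesis, fixed γ.) Let p^{(1)}, …, p^{(B)} be random variables, each superuniform under the null (P(p^{(b)} ≤ t) ≤ t for all t ∈ (0,1)). For fixed γ ∈ (0,1], define Q_γ = min{ q_γ(p^{(1)}/γ, …, p^{(B)}/γ), 1 } where q_γ denotes the empirical γ-quantile (the ⌈γB⌉-th smallest value). Then Q_γ is superuniform: P(Q_γ ≤ x) ≤ x for all x ∈ (0,1). -/
open MeasureTheory ProbabilityTheory Finset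

/-- The empirical `γ`-quantile of `B` numbers: their `⌈γB⌉`-th smallest value. -/
noncomputable def empQuantile (B : ℕ) (γ : ℝ) (v : Fin B → ℝ) : ℝ :=
  ((Multiset.map v Finset.univ.val).sort (· ≤ ·)).getD (⌈γ * B⌉.toNat - 1) 0

open scoped ENNReal NNReal

lemma count_ge_of_empQuantile_le {B : ℕ} {γ x : ℝ} {v : Fin B → ℝ}
    (hk1 : 1 ≤ (⌈γ * B⌉).toNat) (hkB : (⌈γ * B⌉).toNat ≤ B)
    (h : empQuantile B γ v ≤ x) :
    (⌈γ * B⌉).toNat ≤ (Finset.univ.filter (fun b => v b ≤ x)).card := by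
  classical
  set k := (⌈γ * B⌉).toNat with hk
  set l := ((Multiset.map v Finset.univ.val).sort (· ≤ ·)) with hl
  have hlen : l.length = B := by
    simp [hl, Multiset.length_sort]
  have hsorted : l.Pairwise (· ≤ ·) := Multiset.pairwise_sort _ _
  have hidx : k - 1 < l.length := by omega
  have hgetle : l.get ⟨k - 1, hidx⟩ ≤ x := by
    have : l.getD (k - 1) 0 = l.get ⟨k - 1, hidx⟩ := List.getD_eq_get l 0 ⟨k - 1, hidx⟩
    rw [empQuantile] at h
    rw [← hl, this] at h
    exact h
  have htake : ∀ a ∈ l.take k, a ≤ x := by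
    intro a ha
    obtain ⟨i, hi, hget⟩ := List.getElem_of_mem ha
    have hik : i < k := lt_of_lt_of_le hi (by simp [List.length_take])
    have hil : i < l.length := by omega
    have h2 : l[i] ≤ l.get ⟨k - 1, hidx⟩ := by
      apply hsorted.rel_get_of_le
      exact Fin.mk_le_mk.mpr (by omega)
    rw [List.getElem_take] at hget
    exact hget ▸ le_trans h2 hgetle
  have hcount : k ≤ l.countP (fun a => decide (a ≤ x)) := by
    have h1 : (l.take k).filter (fun a => decide (a ≤ x)) = l.take k :=
      List.filter_eq_self.mpr (fun a ha => by simpa using htake a ha)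
    have h2 : ((l.take k).filter (fun a => decide (a ≤ x))).Sublist
        (l.filter (fun a => decide (a ≤ x))) :=
      (List.take_sublist k l).filter _
    have h3 := h2.length_le
    rw [h1] at h3
    rw [List.countP_eq_length_filter]
    simpa [List.length_take, hlen, min_eq_left hkB] using h3
  have heq : (Finset.univ.filter (fun b => v b ≤ x)).card
      = l.countP (fun a => decide (a ≤ x)) := by
    rw [← Multiset.coe_countP, hl, Multiset.sort_eq, Multiset.countP_map]
    simp [Finset.card, Finset.filter_val]
  omega

/-- Quantile aggregation validity for a single null hypothesis with fixed `γ`: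
if each `p⁽ᵇ⁾` is superuniform then so is
`Q_γ = min{γ-quantile of (p⁽ᵇ⁾/γ)_b, 1}`. -/
theorem quantile_aggregation_superuniform {Ω : Type*} [MeasureSpace Ω]
    [IsProbabilityMeasure (ℙ : Measure Ω)] {B : ℕ} (hB : 1 ≤ B)
    (pval : Fin B → Ω → ℝ)
    (hnull : ∀ b : Fin B, ∀ t ∈ Set.Ioo (0 : ℝ) 1,
      ℙ {ω | pval b ω ≤ t} ≤ ENNReal.ofReal t)
    (γ : ℝ) (hγ : γ ∈ Set.Ioc (0 : ℝ) 1)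
    (Q : Ω → ℝ)
    (hQ : ∀ ω, Q ω = min (empQuantile B γ (fun b => pval b ω / γ)) 1) :
    ∀ x ∈ Set.Ioo (0 : ℝ) 1, ℙ {ω | Q ω ≤ x} ≤ ENNReal.ofReal x := by
  classical
  obtain ⟨hγ0, hγ1⟩ := hγ
  intro x ⟨hx0, hx1⟩
  set k := (⌈γ * B⌉).toNat with hkdef
  have hγB : (0 : ℝ) < γ * B := by positivity
  have hceil_pos : 0 < ⌈γ * B⌉ := Int.ceil_pos.mpr hγB
  have hk1 : 1 ≤ k := by
    have := Int.toNat_of_nonneg hceil_pos.le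
    omega
  have hkB : k ≤ B := by
    have h1 : ⌈γ * B⌉ ≤ (B : ℤ) := by
      apply Int.ceil_le.mpr
      push_cast
      nlinarith
    omega
  have hkγ : γ * B ≤ (k : ℝ) := by
    calc γ * B ≤ (⌈γ * B⌉ : ℝ) := Int.le_ceil _
    _ = (k : ℝ) := by rw [hkdef]; exact_mod_cast (Int.toNat_of_nonneg hceil_pos.le).symm
  have hγx : γ * x ∈ Set.Ioo (0 : ℝ) 1 := by
    constructor
    · positivity
    · nlinarith
  -- measurable hulls
  set A : Fin B → Set Ω := fun b => {ω | pval b ω ≤ γ * x} with hA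
  set S : Fin B → Set Ω := fun b => toMeasurable ℙ (A b) with hS
  have hSmeas : ∀ b, MeasurableSet (S b) := fun b => measurableSet_toMeasurable _ _
  set f : Ω → ℝ≥0∞ := fun ω => ∑ b : Fin B, (S b).indicator (fun _ => (1 : ℝ≥0∞)) ω with hf
  have hfmeas : Measurable f := by
    apply Finset.measurable_sum
    intro b _
    exact (measurable_const.indicator (hSmeas b))
  -- pointwise: f ω = card of {b | ω ∈ S b}
  have hfval : ∀ ω, f ω = ((Finset.univ.filter (fun b => ω ∈ S b)).card : ℝ≥0∞) := by
    intro ω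
    rw [hf]
    simp [Set.indicator_apply, Finset.sum_boole]
  -- subset chain
  have hsub : {ω | Q ω ≤ x} ⊆ {ω | (k : ℝ≥0∞) ≤ f ω} := by
    intro ω hω
    simp only [Set.mem_setOf_eq] at hω ⊢
    rw [hQ ω] at hω
    have hq : empQuantile B γ (fun b => pval b ω / γ) ≤ x := by
      rcases min_le_iff.mp hω with h | h
      · exact h
      · linarith
    have hcard := count_ge_of_empQuantile_le hk1 hkB hq
    have hcard2 : k ≤ (Finset.univ.filter (fun b => ω ∈ S b)).card := by
      refine le_trans hcard (Finset.card_le_card ?_)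
      intro b hb
      simp only [Finset.mem_filter, Finset.mem_univ, true_and] at hb ⊢
      have : pval b ω ≤ γ * x := by
        rw [div_le_iff₀ hγ0] at hb
        linarith [hb]
      exact subset_toMeasurable ℙ (A b) this
    rw [hfval ω]
    exact_mod_cast hcard2
  -- Markov
  have hmarkov : (k : ℝ≥0∞) * ℙ {ω | (k : ℝ≥0∞) ≤ f ω} ≤ ∫⁻ ω, f ω ∂ℙ :=
    mul_meas_ge_le_lintegral₀ hfmeas.aemeasurable _
  have hint : ∫⁻ ω, f ω ∂ℙ = ∑ b : Fin B, ℙ (S b) := by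
    rw [hf]
    rw [lintegral_finset_sum _ (fun b _ => measurable_const.indicator (hSmeas b))]
    congr 1
    ext b
    exact lintegral_indicator_one (hSmeas b)
  have hsum : ∑ b : Fin B, ℙ (S b) ≤ (B : ℝ≥0∞) * ENNReal.ofReal (γ * x) := by
    calc ∑ b : Fin B, ℙ (S b) = ∑ b : Fin B, ℙ (A b) := by
          congr 1; ext b; exact measure_toMeasurable _
      _ ≤ ∑ _b : Fin B, ENNReal.ofReal (γ * x) :=
          Finset.sum_le_sum (fun b _ => hnull b _ hγx)
      _ = (B : ℝ≥0∞) * ENNReal.ofReal (γ * x) := by simp [mul_comm]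
  have hfinal : (B : ℝ≥0∞) * ENNReal.ofReal (γ * x) ≤ (k : ℝ≥0∞) * ENNReal.ofReal x := by
    rw [← ENNReal.ofReal_natCast, ← ENNReal.ofReal_natCast, ← ENNReal.ofReal_mul (by positivity),
      ← ENNReal.ofReal_mul (by positivity)]
    apply ENNReal.ofReal_le_ofReal
    nlinarith
  have hk0 : (k : ℝ≥0∞) ≠ 0 := by exact_mod_cast Nat.pos_of_ne_zero (by omega) |>.ne'
  have hktop : (k : ℝ≥0∞) ≠ ⊤ := ENNReal.natCast_ne_top k
  have hchain : (k : ℝ≥0∞) * ℙ {ω | Q ω ≤ x} ≤ (k : ℝ≥0∞) * ENNReal.ofReal x := by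
    calc (k : ℝ≥0∞) * ℙ {ω | Q ω ≤ x}
        ≤ (k : ℝ≥0∞) * ℙ {ω | (k : ℝ≥0∞) ≤ f ω} := by
          exact mul_le_mul_right (measure_mono hsub) _
      _ ≤ ∫⁻ ω, f ω ∂ℙ := hmarkov
      _ = ∑ b : Fin B, ℙ (S b) := hint
      _ ≤ (B : ℝ≥0∞) * ENNReal.ofReal (γ * x) := hsum
      _ ≤ (k : ℝ≥0∞) * ENNReal.ofReal x := hfinal
  exact (ENNReal.mul_le_mul_iff_right hk0 hktop).mp hchain
end

section
/- (Adaptive quantile aggregation validity.) Under the assumptions above, define P* = min{ (1 − log γ_min) · inf_{γ ∈ (γ_min,1)} Q_γ, 1 } for γ_min ∈ (0,1). Then P* is superuniform: P(P* ≤ x) ≤ x for all x ∈ (0,1). -/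
open MeasureTheory ProbabilityTheory Finset

/-- `Q_γ = min{γ-empirical-quantile of (p⁽ᵇ⁾/γ)_b, 1}`. -/
noncomputable def Qgamma (B : ℕ) (γ : ℝ) (v : Fin B → ℝ) : ℝ :=
  min (empQuantile B γ (fun b => v b / γ)) 1

lemma sorted_count_aux {l : List ℝ} (hl : l.Pairwise (· ≤ ·)) {k : ℕ} (hk1 : 1 ≤ k)
    (hk : k - 1 < l.length) {t : ℝ} (h : l.getD (k-1) 0 ≤ t) :
    k ≤ l.countP (fun a => decide (a ≤ t)) := by
  have htake : (l.take k).countP (fun a => decide (a ≤ t)) = (l.take k).length := by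
    rw [List.countP_eq_length]
    intro a ha
    simp only [decide_eq_true_eq]
    obtain ⟨i, hi, rfl⟩ := List.mem_take_iff_getElem.mp ha
    have hil : i < l.length := lt_of_lt_of_le (lt_min_iff.mp hi).1 (by omega)
    have : l[i] ≤ l[k-1] := by
      rcases eq_or_lt_of_le (Nat.le_sub_one_of_lt (lt_min_iff.mp hi).1) with h' | h'
      · simp [h']
      · exact List.Pairwise.rel_get_of_lt hl (by simpa using h')
    calc l[i] ≤ l[k-1] := this
      _ ≤ t := by rwa [List.getD_eq_getElem l 0 hk] at h
  have hlen : (l.take k).length = k := by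
    rw [List.length_take]; omega
  calc k = (l.take k).countP (fun a => decide (a ≤ t)) := by rw [htake, hlen]
    _ ≤ l.countP _ := List.Sublist.countP_le (List.take_sublist k l)

lemma emp_count {B : ℕ} {γ : ℝ} (v : Fin B → ℝ) {t : ℝ}
    (h : empQuantile B γ v ≤ t) (hk1 : 1 ≤ (⌈γ * B⌉).toNat) (hkB : (⌈γ * B⌉).toNat ≤ B) :
    (⌈γ * B⌉).toNat ≤ (Finset.univ.filter (fun b => v b ≤ t)).card := by
  classical
  set k := (⌈γ * B⌉).toNat
  set M := Multiset.map v Finset.univ.val with hM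
  set l := M.sort (· ≤ ·) with hl
  have hlen : l.length = B := by
    rw [hl, Multiset.length_sort, hM, Multiset.card_map]
    simp
  have hcount : k ≤ l.countP (fun a => decide (a ≤ t)) :=
    sorted_count_aux (Multiset.pairwise_sort _ _) hk1 (by rw [hlen]; omega) h
  have hMl : (l : Multiset ℝ) = M := Multiset.sort_eq _ _
  have h2 : (l.countP (fun a => decide (a ≤ t))) = Multiset.countP (fun a => a ≤ t) M := by
    rw [← hMl]
    rw [Multiset.coe_countP]
  rw [h2] at hcount
  have h3 : Multiset.countP (fun a => a ≤ t) M = (Finset.univ.filter (fun b => v b ≤ t)).card := by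
    rw [hM, Multiset.countP_map]
    rfl
  omega

noncomputable def wR (B k : ℕ) : ℝ := if k < B then 1/k - 1/(k+1) else 1/B

lemma wR_nonneg (B k : ℕ) (hk : 1 ≤ k) : 0 ≤ wR B k := by
  unfold wR
  split
  · rw [sub_nonneg]
    apply one_div_le_one_div_of_le
    · exact_mod_cast hk
    · push_cast; linarith
  · positivity

lemma icc_split {k B : ℕ} (h : k ≤ B) (f : ℕ → ℝ) :
    ∑ j ∈ Icc k B, f j = (∑ j ∈ Ico k B, f j) + f B := by
  rw [← Finset.sum_Ico_succ_top h]
  rfl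

lemma wR_tele {B k : ℕ} (hk1 : 1 ≤ k) (hkB : k ≤ B) :
    ∑ j ∈ Icc k B, wR B j = 1 / k := by
  rw [icc_split hkB]
  have h1 : ∑ j ∈ Ico k B, wR B j = ∑ j ∈ Ico k B, (1/(j:ℝ) - 1/(j+1)) := by
    apply Finset.sum_congr rfl
    intro j hj
    rw [Finset.mem_Ico] at hj
    unfold wR
    rw [if_pos hj.2]
  rw [h1]
  have h2 : wR B B = 1 / B := by unfold wR; rw [if_neg (lt_irrefl B)]
  rw [h2, Finset.sum_Ico_eq_sum_range]
  have h3 : ∑ i ∈ range (B - k), (1/((k + i : ℕ):ℝ) - 1/((k+i:ℕ)+1)) =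
      ∑ i ∈ range (B - k), ((fun i => 1/((k+i:ℕ):ℝ)) i - (fun i => 1/((k+i:ℕ):ℝ)) (i+1)) := by
    apply Finset.sum_congr rfl
    intro i _
    push_cast
    ring_nf
  rw [h3, Finset.sum_range_sub' (fun i => 1/((k+i:ℕ):ℝ))]
  have : k + (B - k) = B := by omega
  rw [this]
  push_cast
  ring

lemma wR_harmonic {B k0 : ℕ} (hk1 : 1 ≤ k0) (hkB : k0 ≤ B) :
    ∑ j ∈ Icc k0 B, wR B j * j ≤ 1 + Real.log B - Real.log k0 := by
  rw [icc_split hkB]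
  have hB0 : (0:ℝ) < B := by exact_mod_cast lt_of_lt_of_le Nat.zero_lt_one (le_trans hk1 hkB)
  have h2 : wR B B * B = 1 := by
    unfold wR; rw [if_neg (lt_irrefl B)]
    field_simp
  rw [h2]
  have h1 : ∀ j ∈ Ico k0 B, wR B j * j ≤ Real.log (j+1) - Real.log j := by
    intro j hj
    rw [Finset.mem_Ico] at hj
    have hj1 : 1 ≤ j := le_trans hk1 hj.1
    have hj0 : (0:ℝ) < j := by positivity
    unfold wR
    rw [if_pos hj.2]
    have hlog : Real.log ((j:ℝ)/(j+1)) ≤ (j:ℝ)/(j+1) - 1 :=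
      Real.log_le_sub_one_of_pos (by positivity)
    rw [Real.log_div (by positivity) (by positivity)] at hlog
    have heq : (1/(j:ℝ) - 1/(j+1)) * j = 1 - (j:ℝ)/(j+1) := by field_simp
    rw [heq]
    have : (j:ℝ)/(j+1) - 1 = -(1 - (j:ℝ)/(j+1)) := by ring
    linarith
  have hsum : ∑ j ∈ Ico k0 B, wR B j * j ≤ ∑ j ∈ Ico k0 B, (Real.log (j+1) - Real.log j) :=
    Finset.sum_le_sum h1
  have htele : ∑ j ∈ Ico k0 B, (Real.log ((j:ℝ)+1) - Real.log j) = Real.log B - Real.log k0 := by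
    rw [Finset.sum_Ico_eq_sum_range]
    have h3 : ∑ i ∈ range (B - k0), (Real.log ((k0+i:ℕ)+1) - Real.log (k0+i:ℕ)) =
        ∑ i ∈ range (B - k0), ((fun i => Real.log ((k0+i:ℕ):ℝ)) (i+1) - (fun i => Real.log ((k0+i:ℕ):ℝ)) i) := by
      apply Finset.sum_congr rfl
      intro i _
      push_cast
      ring_nf
    rw [h3, Finset.sum_range_sub (fun i => Real.log ((k0+i:ℕ):ℝ))]
    have : k0 + (B - k0) = B := by omega
    rw [this]
    norm_num
  linarith [hsum, htele.le, htele.ge]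

open scoped Classical in
lemma core_markov {Ω : Type*} [MeasurableSpace Ω] (μ : Measure Ω) {B k0 : ℕ}
    (hk0 : 1 ≤ k0)
    (F : Fin B → ℕ → Set Ω)
    (hmeas : ∀ b k, MeasurableSet (F b k))
    (hmono : ∀ b, ∀ k k', k ≤ k' → F b k ⊆ F b k') :
    μ {ω | ∃ k ∈ Icc k0 B, k ≤ (univ.filter (fun b => ω ∈ F b k)).card}
      ≤ ∑ b : Fin B, ∑ k ∈ Icc k0 B, ENNReal.ofReal (wR B k) * μ (F b k) := by
  classical
  set g : Ω → ENNReal :=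
    fun ω => ∑ b : Fin B, ∑ k ∈ Icc k0 B, (F b k).indicator (fun _ => ENNReal.ofReal (wR B k)) ω
    with hg
  have hgmeas : Measurable g := by
    apply Finset.measurable_sum
    intro b _
    apply Finset.measurable_sum
    intro k _
    exact measurable_const.indicator (hmeas b k)
  have hone : ∀ ω, (∃ k ∈ Icc k0 B, k ≤ (univ.filter (fun b => ω ∈ F b k)).card) → 1 ≤ g ω := by
    rintro ω ⟨k, hk, hcard⟩
    rw [Finset.mem_Icc] at hk
    set s := univ.filter (fun b => ω ∈ F b k) with hs
    have hinner : ∀ b ∈ s, ENNReal.ofReal (1/k) ≤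
        ∑ k' ∈ Icc k0 B, (F b k').indicator (fun _ => ENNReal.ofReal (wR B k')) ω := by
      intro b hb
      have hbF : ω ∈ F b k := by
        rw [hs, Finset.mem_filter] at hb
        exact hb.2
      calc ENNReal.ofReal (1/k) = ∑ k' ∈ Icc k B, ENNReal.ofReal (wR B k') := by
            rw [← ENNReal.ofReal_sum_of_nonneg (fun j hj => wR_nonneg B j
              (le_trans (le_trans hk0 hk.1) (Finset.mem_Icc.mp hj).1)),
              wR_tele (le_trans hk0 hk.1) hk.2]
        _ = ∑ k' ∈ Icc k B, (F b k').indicator (fun _ => ENNReal.ofReal (wR B k')) ω := by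
            apply Finset.sum_congr rfl
            intro k' hk'
            rw [Finset.mem_Icc] at hk'
            have : ω ∈ F b k' := hmono b k k' hk'.1 hbF
            rw [Set.indicator_of_mem this]
        _ ≤ ∑ k' ∈ Icc k0 B, (F b k').indicator (fun _ => ENNReal.ofReal (wR B k')) ω := by
            apply Finset.sum_le_sum_of_subset
            apply Finset.Icc_subset_Icc_left hk.1
    have h1 : (k : ENNReal) * ENNReal.ofReal (1/k) = 1 := by
      rw [← ENNReal.ofReal_natCast k, ← ENNReal.ofReal_mul (by positivity)]
      have hk0' : (0:ℝ) < k := by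
        have : 1 ≤ k := le_trans hk0 hk.1
        exact_mod_cast this
      rw [mul_one_div, div_self (ne_of_gt hk0'), ENNReal.ofReal_one]
    calc (1 : ENNReal) = k * ENNReal.ofReal (1/k) := h1.symm
      _ ≤ (s.card : ENNReal) * ENNReal.ofReal (1/k) := by
          apply mul_le_mul_left
          exact_mod_cast hcard
      _ = ∑ b ∈ s, ENNReal.ofReal (1/k) := by
          rw [Finset.sum_const, nsmul_eq_mul]
      _ ≤ ∑ b ∈ s, ∑ k' ∈ Icc k0 B, (F b k').indicator (fun _ => ENNReal.ofReal (wR B k')) ω :=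
          Finset.sum_le_sum hinner
      _ ≤ g ω := by
          rw [hg]
          apply Finset.sum_le_sum_of_subset (Finset.subset_univ s)
  calc μ {ω | ∃ k ∈ Icc k0 B, k ≤ (univ.filter (fun b => ω ∈ F b k)).card}
      ≤ μ {ω | 1 ≤ g ω} := measure_mono (fun ω hω => hone ω hω)
    _ ≤ ∫⁻ ω, g ω ∂μ := by
        have := mul_meas_ge_le_lintegral₀ hgmeas.aemeasurable (μ := μ) 1
        rwa [one_mul] at this
    _ = ∑ b : Fin B, ∑ k ∈ Icc k0 B, ENNReal.ofReal (wR B k) * μ (F b k) := by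
        rw [hg, lintegral_finset_sum _ (fun b _ => by
          apply Finset.measurable_sum
          intro k _
          exact measurable_const.indicator (hmeas b k))]
        apply Finset.sum_congr rfl
        intro b _
        rw [lintegral_finset_sum (f := fun k ω => (F b k).indicator (fun _ => ENNReal.ofReal (wR B k)) ω)
          _ (fun k _ => measurable_const.indicator (hmeas b k))]
        apply Finset.sum_congr rfl
        intro k _
        rw [lintegral_indicator_const (hmeas b k)]

set_option maxHeartbeats 1000000 in
/-- Adaptive quantile aggregation validity: if each `p⁽ᵇ⁾` is superuniform under the null,
then `P* = min{(1 - log γ_min) · inf_{γ ∈ (γ_min,1)} Q_γ, 1}` is superuniform. -/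
theorem adaptive_quantile_aggregation_superuniform {Ω : Type*} [MeasureSpace Ω]
    [IsProbabilityMeasure (ℙ : Measure Ω)] {B : ℕ} (hB : 1 ≤ B)
    (pval : Fin B → Ω → ℝ)
    (hnull : ∀ b : Fin B, ∀ t ∈ Set.Ioo (0 : ℝ) 1,
      ℙ {ω | pval b ω ≤ t} ≤ ENNReal.ofReal t)
    (γmin : ℝ) (hγmin : γmin ∈ Set.Ioo (0 : ℝ) 1)
    (Pstar : Ω → ℝ)
    (hPstar : ∀ ω, Pstar ω =
      min ((1 - Real.log γmin) *
        sInf {x : ℝ | ∃ γ ∈ Set.Ioo γmin 1, x = Qgamma B γ (fun b => pval b ω)}) 1) :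
    ∀ x ∈ Set.Ioo (0 : ℝ) 1, ℙ {ω | Pstar ω ≤ x} ≤ ENNReal.ofReal x := by
  classical
  intro x hx
  obtain ⟨hx0, hx1⟩ := hx
  obtain ⟨hγ0, hγ1⟩ := hγmin
  have hB0' : (0:ℝ) < B := by exact_mod_cast lt_of_lt_of_le Nat.zero_lt_one hB
  set c := 1 - Real.log γmin with hc_def
  have hlogneg : Real.log γmin < 0 := Real.log_neg hγ0 hγ1
  have hc1 : 1 < c := by rw [hc_def]; linarith
  have hc0 : 0 < c := by linarith
  set u := x / c with hu_def
  have hu0 : 0 < u := div_pos hx0 hc0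
  have hux : u < x := by
    rw [hu_def, div_lt_iff₀ hc0]
    nlinarith
  have hu1 : u < 1 := lt_trans hux hx1
  set k0 := ⌊γmin * B⌋₊ + 1 with hk0_def
  have hγB : γmin * B < B := by nlinarith
  have hfloorB : ⌊γmin * B⌋₊ < B := by
    have h1 : (⌊γmin * B⌋₊ : ℝ) ≤ γmin * B := Nat.floor_le (by positivity)
    have : (⌊γmin * B⌋₊ : ℝ) < B := lt_of_le_of_lt h1 hγB
    exact_mod_cast this
  have hk0B : k0 ≤ B := by omega
  have hk01 : 1 ≤ k0 := by omega
  have hγk0 : γmin * B < k0 := by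
    have := Nat.lt_succ_floor (γmin * B)
    rw [hk0_def]
    push_cast
    push_cast [Nat.succ_eq_add_one] at this
    linarith
  have key : ∀ t, u < t → t < 1 → ℙ {ω | Pstar ω ≤ x} ≤ ENNReal.ofReal (t * c) := by
    intro t hut ht1
    have ht0 : 0 < t := lt_trans hu0 hut
    set A : Fin B → ℕ → Set Ω := fun b k => {ω | pval b ω ≤ ((k:ℝ) / B) * t} with hA
    set F : Fin B → ℕ → Set Ω := fun b k => ⋂ j ∈ Icc k B, toMeasurable ℙ (A b j) with hF
    have hmeasF : ∀ b k, MeasurableSet (F b k) := fun b k =>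
      Finset.measurableSet_biInter _ (fun j _ => measurableSet_toMeasurable _ _)
    have hmonoA : ∀ b : Fin B, ∀ k k' : ℕ, k ≤ k' → A b k ⊆ A b k' := by
      intro b k k' hkk' ω hω
      have hkk : (k:ℝ) ≤ k' := by exact_mod_cast hkk'
      have h2 : (k:ℝ)/B ≤ (k':ℝ)/B := by gcongr
      have hkr : ((k:ℝ)/B)*t ≤ ((k':ℝ)/B)*t := mul_le_mul_of_nonneg_right h2 ht0.le
      exact le_trans hω hkr
    have hsubAF : ∀ b : Fin B, ∀ k, k ≤ B → A b k ⊆ F b k := by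
      intro b k hkB'
      rw [hF]
      apply Set.subset_iInter₂
      intro j hj
      rw [Finset.mem_Icc] at hj
      exact (hmonoA b k j hj.1).trans (subset_toMeasurable _ _)
    have hmonoF : ∀ b : Fin B, ∀ k k' : ℕ, k ≤ k' → F b k ⊆ F b k' := by
      intro b k k' hkk' ω hω
      rw [hF] at hω ⊢
      rw [Set.mem_iInter₂] at hω ⊢
      intro j hj
      rw [Finset.mem_Icc] at hj
      exact hω j (Finset.mem_Icc.mpr ⟨le_trans hkk' hj.1, hj.2⟩)
    have hmeasF_le : ∀ b : Fin B, ∀ k ∈ Icc k0 B, ℙ (F b k) ≤ ENNReal.ofReal (((k:ℝ)/B) * t) := by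
      intro b k hk
      rw [Finset.mem_Icc] at hk
      have hk1 : 1 ≤ k := le_trans hk01 hk.1
      have h1 : F b k ⊆ toMeasurable ℙ (A b k) := by
        rw [hF]
        exact Set.iInter₂_subset k (Finset.mem_Icc.mpr ⟨le_refl k, hk.2⟩)
      have hval : ((k:ℝ)/B) * t ∈ Set.Ioo (0:ℝ) 1 := by
        constructor
        · have : (0:ℝ) < k := by exact_mod_cast hk1
          positivity
        · have hkB' : ((k:ℝ)/B) ≤ 1 := by
            rw [div_le_one hB0']
            exact_mod_cast hk.2
          nlinarith
      calc ℙ (F b k) ≤ ℙ (toMeasurable ℙ (A b k)) := measure_mono h1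
        _ = ℙ (A b k) := measure_toMeasurable _
        _ ≤ ENNReal.ofReal (((k:ℝ)/B) * t) := hnull b _ hval
    have hsub : {ω | Pstar ω ≤ x} ⊆
        {ω | ∃ k ∈ Icc k0 B, k ≤ (univ.filter (fun b => ω ∈ F b k)).card} := by
      intro ω hω
      rw [Set.mem_setOf_eq, hPstar ω] at hω
      set S := {y : ℝ | ∃ γ ∈ Set.Ioo γmin 1, y = Qgamma B γ (fun b => pval b ω)} with hS
      have hSne : S.Nonempty :=
        ⟨Qgamma B ((γmin+1)/2) (fun b => pval b ω),
          ⟨(γmin+1)/2, ⟨by linarith, by linarith⟩, rfl⟩⟩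
      have hI : c * sInf S ≤ x := by
        rcases min_le_iff.mp hω with h | h
        · exact h
        · linarith
      have hIu : sInf S < t := by
        have h1 : sInf S ≤ u := by
          rw [hu_def, le_div_iff₀ hc0]
          linarith [hI]
        linarith
      have hex : ∃ s ∈ S, s < t := by
        by_cases hbdd : BddBelow S
        · exact exists_lt_of_csInf_lt hSne hIu
        · exact (not_bddBelow_iff.mp hbdd) t
      obtain ⟨sv, hsvS, hst⟩ := hex
      obtain ⟨γ, hγm, hsv⟩ := hsvS
      obtain ⟨hγl, hγu⟩ := hγm
      have hγ0' : 0 < γ := lt_trans hγ0 hγl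
      rw [hsv] at hst
      have hemp : empQuantile B γ (fun b => pval b ω / γ) < t := by
        rcases min_lt_iff.mp hst with h | h
        · exact h
        · linarith
      set k := (⌈γ * (B:ℝ)⌉).toNat with hk_def
      have hγB0 : (0:ℝ) < γ * B := mul_pos hγ0' hB0'
      have hceil1 : (1:ℤ) ≤ ⌈γ * (B:ℝ)⌉ := Int.ceil_pos.mpr hγB0
      have hk1 : 1 ≤ k := by omega
      have hkZ : (k:ℤ) = ⌈γ * (B:ℝ)⌉ := by
        rw [hk_def]
        exact Int.toNat_of_nonneg (by omega)
      have hkcast : (k:ℝ) = ((⌈γ * (B:ℝ)⌉ : ℤ) : ℝ) := by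
        rw [← hkZ]
        push_cast
        ring
      have hγBk : γ * B ≤ k := by
        rw [hkcast]
        exact Int.le_ceil _
      have hkB : k ≤ B := by
        have h1 : ⌈γ * (B:ℝ)⌉ ≤ (B:ℤ) := by
          apply Int.ceil_le.mpr
          push_cast
          nlinarith
        omega
      have hk0k : k0 ≤ k := by
        have h1 : γmin * B < k := by
          have : γmin * B < γ * B := by nlinarith
          linarith
        have h2 : (⌊γmin * B⌋₊ : ℝ) < k := lt_of_le_of_lt (Nat.floor_le (by positivity)) h1
        have h3 : ⌊γmin * B⌋₊ < k := by exact_mod_cast h2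
        omega
      have hcount : k ≤ (univ.filter (fun b => pval b ω / γ ≤ t)).card := by
        apply emp_count _ hemp.le
        · rw [← hk_def]; exact hk1
        · rw [← hk_def]; exact hkB
      have hsubset : (univ.filter (fun b => pval b ω / γ ≤ t)) ⊆
          (univ.filter (fun b => ω ∈ F b k)) := by
        intro b hb
        rw [Finset.mem_filter] at hb ⊢
        refine ⟨Finset.mem_univ b, ?_⟩
        have hpb : pval b ω ≤ γ * t := by
          have := hb.2
          rw [div_le_iff₀ hγ0'] at this
          linarith
        have hpb2 : pval b ω ≤ ((k:ℝ)/B) * t := by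
          have hγk : γ ≤ (k:ℝ)/B := by
            rw [le_div_iff₀ hB0']
            exact hγBk
          exact le_trans hpb (mul_le_mul_of_nonneg_right hγk ht0.le)
        exact hsubAF b k hkB hpb2
      exact ⟨k, Finset.mem_Icc.mpr ⟨hk0k, hkB⟩,
        le_trans hcount (Finset.card_le_card hsubset)⟩
    have hinner_real : ∑ k ∈ Icc k0 B, wR B k * (((k:ℝ)/B) * t) ≤ t * c / B := by
      have h1 : ∑ k ∈ Icc k0 B, wR B k * (((k:ℝ)/B) * t) =
          (t / B) * ∑ k ∈ Icc k0 B, wR B k * k := by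
        rw [Finset.mul_sum]
        apply Finset.sum_congr rfl
        intro k _
        ring
      rw [h1]
      have h2 : ∑ k ∈ Icc k0 B, wR B k * k ≤ 1 + Real.log B - Real.log k0 :=
        wR_harmonic hk01 hk0B
      have h3 : Real.log B - Real.log k0 ≤ - Real.log γmin := by
        have hlogk0 : Real.log γmin + Real.log B ≤ Real.log k0 := by
          rw [← Real.log_mul (ne_of_gt hγ0) (ne_of_gt hB0')]
          apply Real.log_le_log (by positivity)
          have : (0:ℝ) < k0 := by exact_mod_cast hk01
          linarith [hγk0]
        linarith
      have h4 : ∑ k ∈ Icc k0 B, wR B k * k ≤ c := by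
        rw [hc_def]; linarith
      have h5 : (0:ℝ) ≤ t / B := by positivity
      calc (t / B) * ∑ k ∈ Icc k0 B, wR B k * k ≤ (t / B) * c := by
            apply mul_le_mul_of_nonneg_left h4 h5
        _ = t * c / B := by ring
    calc ℙ {ω | Pstar ω ≤ x}
        ≤ ℙ {ω | ∃ k ∈ Icc k0 B, k ≤ (univ.filter (fun b => ω ∈ F b k)).card} :=
          measure_mono hsub
      _ ≤ ∑ b : Fin B, ∑ k ∈ Icc k0 B, ENNReal.ofReal (wR B k) * ℙ (F b k) :=
          core_markov ℙ hk01 F hmeasF hmonoF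
      _ ≤ ∑ b : Fin B, ∑ k ∈ Icc k0 B,
            ENNReal.ofReal (wR B k) * ENNReal.ofReal (((k:ℝ)/B) * t) := by
          apply Finset.sum_le_sum
          intro b _
          apply Finset.sum_le_sum
          intro k hk
          exact mul_le_mul_right (hmeasF_le b k hk) _
      _ = ∑ b : Fin B, ∑ k ∈ Icc k0 B, ENNReal.ofReal (wR B k * (((k:ℝ)/B) * t)) := by
          apply Finset.sum_congr rfl
          intro b _
          apply Finset.sum_congr rfl
          intro k hk
          rw [← ENNReal.ofReal_mul (wR_nonneg B k (le_trans hk01 (Finset.mem_Icc.mp hk).1))]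
      _ = ∑ _b : Fin B, ENNReal.ofReal (∑ k ∈ Icc k0 B, wR B k * (((k:ℝ)/B) * t)) := by
          apply Finset.sum_congr rfl
          intro b _
          rw [ENNReal.ofReal_sum_of_nonneg]
          intro k hk
          have hw := wR_nonneg B k (le_trans hk01 (Finset.mem_Icc.mp hk).1)
          have hk1 : 1 ≤ k := le_trans hk01 (Finset.mem_Icc.mp hk).1
          have : (0:ℝ) < k := by exact_mod_cast hk1
          positivity
      _ ≤ ∑ _b : Fin B, ENNReal.ofReal (t * c / B) := by
          apply Finset.sum_le_sum
          intro b _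
          exact ENNReal.ofReal_le_ofReal hinner_real
      _ = ENNReal.ofReal (t * c) := by
          rw [Finset.sum_const, Finset.card_univ, Fintype.card_fin, nsmul_eq_mul,
            ← ENNReal.ofReal_natCast B, ← ENNReal.ofReal_mul (by positivity)]
          congr 1
          field_simp
  have hfin : ℙ {ω | Pstar ω ≤ x} ≠ ⊤ := measure_ne_top _ _
  have hreal : ∀ t, u < t → t < 1 → (ℙ {ω | Pstar ω ≤ x}).toReal ≤ t * c := by
    intro t h1 h2
    have ht0 : 0 < t := lt_trans hu0 h1
    exact ENNReal.toReal_le_of_le_ofReal (by positivity) (key t h1 h2)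
  have hfinal : (ℙ {ω | Pstar ω ≤ x}).toReal ≤ u * c := by
    by_contra hcon
    push_neg at hcon
    set a := (ℙ {ω | Pstar ω ≤ x}).toReal with ha_def
    have hua : u < a / c := by
      rw [lt_div_iff₀ hc0]
      linarith
    set t := min ((u + a/c)/2) ((u+1)/2) with ht_def
    have hut : u < t := lt_min (by linarith) (by linarith)
    have ht1 : t < 1 := lt_of_le_of_lt (min_le_right _ _) (by linarith)
    have htac : t < a/c := lt_of_le_of_lt (min_le_left _ _) (by linarith)
    have h5 := hreal t hut ht1
    have : t * c < a := by
      rw [lt_div_iff₀ hc0] at htac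
      exact htac
    linarith
  have hucx : u * c = x := by
    rw [hu_def]
    field_simp
  calc ℙ {ω | Pstar ω ≤ x} = ENNReal.ofReal ((ℙ {ω | Pstar ω ≤ x}).toReal) :=
        (ENNReal.ofReal_toReal hfin).symm
    _ ≤ ENNReal.ofReal x := ENNReal.ofReal_le_ofReal (by rw [hucx] at hfinal; exact hfinal)
end
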